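/- Let E be a real Banach space, let w : (0,∞) → ℝ be integrable on (0,t) for every t > 0 with ‖w‖_W := sup_{t>0} |Pw(t) − w(t)| < ∞, and let u : (0,∞) → E be strongly measurable with ∫₀^T (1 + |log s|)·‖u(s)‖ ds/s < ∞ for every T > 0. Then for every t > 0 the finite-interval integration-by-parts identity holds: ∫₀ᵗ Pw(s)·u(s) ds/s = Pw(t)·∫₀ᵗ u(s) ds/s − ∫₀ᵗ (w(r) − Pw(r))·(∫₀^r u(s) ds/s) dr/r, all integrals being absolutely convergent Bochner integrals. -/

import Mathlib

open MeasureTheory Set Real Filter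

/-- The averaging operator `Pw(t) = (1/t) ∫₀ᵗ w(s) ds`. -/
noncomputable def Pav (w : ℝ → ℝ) (t : ℝ) : ℝ := (1 / t) * ∫ s in Ioo (0 : ℝ) t, w s

namespace FIIBPAux

variable {w : ℝ → ℝ}

lemma integrableOn_Icc (hwInt : ∀ t > (0:ℝ), IntegrableOn w (Ioo 0 t)) (b : ℝ) :
    IntegrableOn w (Icc 0 b) := by
  rcases lt_or_ge b 0 with hb | hb
  · rw [Icc_eq_empty (by linarith)]; simp [IntegrableOn]
  · have h1 : IntegrableOn w (Ioo 0 b) :=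
      (hwInt (b+1) (by linarith)).mono_set (Ioo_subset_Ioo le_rfl (by linarith))
    unfold IntegrableOn
    rwa [← Measure.restrict_congr_set (Ioo_ae_eq_Icc)]

lemma contOn_F (hwInt : ∀ t > (0:ℝ), IntegrableOn w (Ioo 0 t)) :
    ContinuousOn (fun r => ∫ s in Ioo (0:ℝ) r, w s) (Ioi 0) := by
  have key : ∀ b > (0:ℝ), ContinuousOn (fun r => ∫ s in Ioo (0:ℝ) r, w s) (Icc 0 b) := by
    intro b hb
    have := intervalIntegral.continuousOn_primitive (f := w) (a := 0) (b := b) (μ := volume)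
      (integrableOn_Icc hwInt b)
    have heq : (fun x => ∫ t in Ioc (0:ℝ) x, w t) = fun r => ∫ s in Ioo (0:ℝ) r, w s := by
      funext x; exact integral_Ioc_eq_integral_Ioo
    rwa [heq] at this
  intro r hr
  have hr' : (0:ℝ) < r := hr
  have h1 : ContinuousWithinAt (fun r => ∫ s in Ioo (0:ℝ) r, w s) (Icc 0 (r+1)) r :=
    (key (r+1) (by linarith)) r ⟨le_of_lt hr', by linarith⟩
  apply h1.mono_of_mem_nhdsWithin
  filter_upwards [inter_mem_nhdsWithin (Ioi 0) (Iio_mem_nhds (show r < r+1 by linarith))]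
  rintro x ⟨hx1, hx2⟩
  exact ⟨le_of_lt hx1, le_of_lt hx2⟩

lemma contOn_Pav (hwInt : ∀ t > (0:ℝ), IntegrableOn w (Ioo 0 t)) :
    ContinuousOn (Pav w) (Ioi 0) := by
  unfold Pav
  exact (continuousOn_const.div continuousOn_id fun x hx => ne_of_gt hx).mul (contOn_F hwInt)

lemma aesm_Pav (hwInt : ∀ t > (0:ℝ), IntegrableOn w (Ioo 0 t)) {t : ℝ} :
    AEStronglyMeasurable (Pav w) (volume.restrict (Ioo 0 t)) :=
  ((contOn_Pav hwInt).aestronglyMeasurable measurableSet_Ioi).mono_measure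
    (Measure.restrict_mono Ioo_subset_Ioi_self le_rfl)

lemma int_inv {a b : ℝ} (ha : 0 < a) (hab : a ≤ b) :
    ∫ r in Ioo a b, r⁻¹ = Real.log b - Real.log a := by
  rcases eq_or_lt_of_le hab with rfl | hab
  · simp
  · rw [← integral_Ioc_eq_integral_Ioo, ← intervalIntegral.integral_of_le hab.le,
      integral_inv (by rw [uIcc_of_le hab.le, mem_Icc]; push_neg; intro h; linarith),
      Real.log_div (by linarith) (ne_of_gt ha)]

lemma int_inv_sq {a b : ℝ} (ha : 0 < a) (hab : a ≤ b) :
    ∫ r in Ioo a b, (r^2)⁻¹ = a⁻¹ - b⁻¹ := by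
  rw [← integral_Ioc_eq_integral_Ioo, ← intervalIntegral.integral_of_le hab]
  have h0 : (0:ℝ) ∉ Set.uIcc a b := by
    rw [uIcc_of_le hab, mem_Icc]; push_neg; intro h; linarith
  have := integral_zpow (a := a) (b := b) (n := -2) (Or.inr ⟨by norm_num, h0⟩)
  simp only [zpow_neg] at this ⊢
  rw [show ((-2:ℤ)+1) = -1 by norm_num] at this
  push_cast at this
  have h2 : ∀ x:ℝ, x^(2:ℤ) = x^2 := fun x => by rw [zpow_two, pow_two]
  simp only [h2] at this
  rw [this]
  simp only [zpow_neg, zpow_one]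
  ring


lemma aesm_div_id {f : ℝ → ℝ} {μ : Measure ℝ} (hf : AEStronglyMeasurable f μ) :
    AEStronglyMeasurable (fun r => f r / r) μ := by
  simp only [div_eq_mul_inv]
  exact hf.mul (measurable_inv.aestronglyMeasurable)

lemma intOn_sub_div {C : ℝ} (hwInt : ∀ t > (0:ℝ), IntegrableOn w (Ioo 0 t))
    (hW : ∀ t > (0 : ℝ), |Pav w t - w t| ≤ C) {s t : ℝ} (hs : 0 < s) (hst : s ≤ t) :
    IntegrableOn (fun r => (w r - Pav w r) / r) (Ioo s t) := by
  have hw_aesm : AEStronglyMeasurable w (volume.restrict (Ioo s t)) := by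
    refine ((hwInt (t+1) (by linarith)).mono_set
      (Ioo_subset_Ioo (le_of_lt hs) (by linarith))).aestronglyMeasurable
  have hPav_aesm : AEStronglyMeasurable (Pav w) (volume.restrict (Ioo s t)) :=
    ((contOn_Pav hwInt).aestronglyMeasurable measurableSet_Ioi).mono_measure
      (Measure.restrict_mono (fun x hx => lt_trans hs hx.1) le_rfl)
  refine Integrable.mono' (g := fun _ => C / s)
    (integrableOn_const measure_Ioo_lt_top.ne)
    (aesm_div_id (hw_aesm.sub hPav_aesm)) ?_
  filter_upwards [ae_restrict_mem measurableSet_Ioo] with r hr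
  have hr0 : 0 < r := lt_trans hs hr.1
  have h1 : |w r - Pav w r| ≤ C := by rw [abs_sub_comm]; exact hW r hr0
  have hC : 0 ≤ C := le_trans (abs_nonneg _) h1
  rw [Real.norm_eq_abs, abs_div, abs_of_pos hr0]
  exact div_le_div₀ hC h1 hs (le_of_lt hr.1)

lemma keyA {C : ℝ} (hwInt : ∀ t > (0:ℝ), IntegrableOn w (Ioo 0 t))
    (hW : ∀ t > (0 : ℝ), |Pav w t - w t| ≤ C) {s t : ℝ} (hs : 0 < s) (hst : s ≤ t) :
    ∫ r in Ioo s t, (w r - Pav w r) / r = Pav w t - Pav w s := by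
  rcases eq_or_lt_of_le hst with rfl | hst
  · simp
  have ht : (0:ℝ) < t := lt_trans hs hst
  set F : ℝ → ℝ := fun r => ∫ σ in Ioo (0:ℝ) r, w σ with hF
  -- integrability of the two pieces
  have hw_int_Ioo : IntegrableOn w (Ioo s t) :=
    (hwInt (t+1) (by linarith)).mono_set (Ioo_subset_Ioo (le_of_lt hs) (by linarith))
  have hwdiv : IntegrableOn (fun r => w r / r) (Ioo s t) := by
    refine Integrable.mono' (g := fun r => |w r| * s⁻¹) (hw_int_Ioo.abs.mul_const _)
      (aesm_div_id hw_int_Ioo.aestronglyMeasurable) ?_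
    filter_upwards [ae_restrict_mem measurableSet_Ioo] with r hr
    rw [Real.norm_eq_abs, abs_div, abs_of_pos (lt_trans hs hr.1), div_eq_mul_inv]
    exact mul_le_mul_of_nonneg_left
      (inv_anti₀ hs (le_of_lt hr.1)) (abs_nonneg _)
  have hPdiv : IntegrableOn (fun r => Pav w r / r) (Ioo s t) := by
    have hc : ContinuousOn (fun r => Pav w r / r) (Icc s t) := by
      refine ContinuousOn.div ((contOn_Pav hwInt).mono ?_) continuousOn_id ?_
      · exact fun x hx => lt_of_lt_of_le hs hx.1
      · exact fun x hx => ne_of_gt (lt_of_lt_of_le hs hx.1)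
    exact (hc.integrableOn_Icc).mono_set Ioo_subset_Icc_self
  have hsplit : ∫ r in Ioo s t, (w r - Pav w r) / r
      = (∫ r in Ioo s t, w r / r) - ∫ r in Ioo s t, Pav w r / r := by
    rw [← integral_sub hwdiv hPdiv]
    refine setIntegral_congr_fun measurableSet_Ioo fun r hr => ?_
    simp [sub_div]
  -- Fubini
  set f : ℝ → ℝ → ℝ := fun r σ => if σ < r then (r^2)⁻¹ * w σ else 0 with hf
  have hw0t : IntegrableOn w (Ioo 0 t) := hwInt t ht
  have hS : MeasurableSet {p : ℝ × ℝ | p.2 < p.1} := measurableSet_lt measurable_snd measurable_fst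
  have huncurry_eq : Function.uncurry f =
      Set.indicator {p : ℝ × ℝ | p.2 < p.1} (fun p => (p.1^2)⁻¹ * w p.2) := by
    funext p
    by_cases h : p.2 < p.1 <;> simp [Function.uncurry, hf, h, Set.indicator]
  have haesm : AEStronglyMeasurable (Function.uncurry f)
      ((volume.restrict (Ioo s t)).prod (volume.restrict (Ioo 0 t))) := by
    rw [huncurry_eq]
    exact (((measurable_fst.pow_const 2).inv.aestronglyMeasurable).mul
      hw0t.aestronglyMeasurable.comp_snd).indicator hS
  have hint : Integrable (Function.uncurry f)
      ((volume.restrict (Ioo s t)).prod (volume.restrict (Ioo 0 t))) := by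
    refine Integrable.mono' (g := fun p : ℝ × ℝ => (s^2)⁻¹ * |w p.2|) ?_ haesm ?_
    · exact Integrable.mul_prod (μ := volume.restrict (Ioo s t))
        (show Integrable (fun _ : ℝ => (s^2)⁻¹) (volume.restrict (Ioo s t)) from
          integrableOn_const measure_Ioo_lt_top.ne) hw0t.abs
    · rw [Measure.prod_restrict]
      filter_upwards [ae_restrict_mem (measurableSet_Ioo.prod measurableSet_Ioo)] with p hp
      rcases hp with ⟨hp1, hp2⟩
      by_cases h : p.2 < p.1
      · rw [Function.uncurry]
        simp only [hf, if_pos h]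
        rw [Real.norm_eq_abs, abs_mul, abs_inv, abs_of_pos (pow_pos (lt_trans hs hp1.1) 2)]
        refine mul_le_mul_of_nonneg_right ?_ (abs_nonneg _)
        refine inv_anti₀ (pow_pos hs 2) ?_
        exact pow_le_pow_left₀ (le_of_lt hs) (le_of_lt hp1.1) 2
      · rw [Function.uncurry]
        simp only [hf, if_neg h, norm_zero]
        positivity
  have hswap := integral_integral_swap hint
  -- LHS of swap
  have hL : ∀ r ∈ Ioo s t, (∫ σ in Ioo (0:ℝ) t, f r σ) = (r^2)⁻¹ * F r := by
    intro r hr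
    have : (fun σ => f r σ) = fun σ => (r^2)⁻¹ * (Iio r).indicator w σ := by
      funext σ
      by_cases h : σ < r <;> simp [hf, h, Set.indicator, mem_Iio]
    rw [this, integral_const_mul, setIntegral_indicator measurableSet_Iio]
    have : Ioo (0:ℝ) t ∩ Iio r = Ioo 0 r := by
      ext σ
      simp only [mem_inter_iff, mem_Ioo, mem_Iio]
      exact ⟨fun h => ⟨h.1.1, h.2⟩, fun h => ⟨⟨h.1, lt_trans h.2 hr.2⟩, h.2⟩⟩
    rw [this]
  -- RHS of swap
  have hR : ∀ σ ∈ Ioo (0:ℝ) t, (∫ r in Ioo s t, f r σ) = w σ * ((max s σ)⁻¹ - t⁻¹) := by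
    intro σ hσ
    have : (fun r => f r σ) = fun r => (Ioi σ).indicator (fun r => (r^2)⁻¹ * w σ) r := by
      funext r
      by_cases h : σ < r <;> simp [hf, h, Set.indicator, mem_Ioi]
    rw [this, setIntegral_indicator measurableSet_Ioi]
    have hset : Ioo s t ∩ Ioi σ = Ioo (max s σ) t := by
      ext r
      simp only [mem_inter_iff, mem_Ioo, mem_Ioi, max_lt_iff]
      tauto
    rw [hset, integral_mul_const, int_inv_sq (lt_max_of_lt_left hs)
      (max_le (le_of_lt hst) (le_of_lt hσ.2)), mul_comm]
  -- the φ function and its integral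
  set φ : ℝ → ℝ := fun σ => w σ * ((max s σ)⁻¹ - t⁻¹) with hφ
  have hwIcc : IntegrableOn w (Icc 0 t) := integrableOn_Icc hwInt t
  have hwIoc : IntegrableOn w (Ioc 0 t) := hwIcc.mono_set Ioc_subset_Icc_self
  have hg_meas : Measurable fun σ : ℝ => (max s σ)⁻¹ - t⁻¹ :=
    ((continuous_const.max continuous_id).measurable.inv).sub measurable_const
  have hφint : IntegrableOn φ (Ioc 0 t) := by
    refine Integrable.mono' (g := fun σ => |w σ| * (s⁻¹ + t⁻¹)) (hwIoc.abs.mul_const _)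
      (hwIoc.aestronglyMeasurable.mul hg_meas.aestronglyMeasurable) ?_
    refine Eventually.of_forall fun σ => ?_
    have hm : (0:ℝ) < max s σ := lt_max_of_lt_left hs
    rw [Real.norm_eq_abs, hφ, abs_mul]
    refine mul_le_mul_of_nonneg_left ?_ (abs_nonneg _)
    refine le_trans (abs_sub _ _) ?_
    rw [abs_of_nonneg (inv_nonneg.mpr hm.le), abs_of_nonneg (inv_nonneg.mpr ht.le)]
    exact add_le_add (inv_anti₀ hs (le_max_left _ _)) le_rfl
  have hsplitφ : ∫ σ in Ioc (0:ℝ) t, φ σ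
      = (∫ σ in Ioc (0:ℝ) s, φ σ) + ∫ σ in Ioc s t, φ σ := by
    rw [← setIntegral_union (Ioc_disjoint_Ioc_of_le le_rfl) measurableSet_Ioc
      (hφint.mono_set (Ioc_subset_Ioc le_rfl (le_of_lt hst)))
      (hφint.mono_set (Ioc_subset_Ioc (le_of_lt hs) le_rfl)),
      Ioc_union_Ioc_eq_Ioc (le_of_lt hs) (le_of_lt hst)]
  have hpiece1 : ∫ σ in Ioc (0:ℝ) s, φ σ = F s * (s⁻¹ - t⁻¹) := by
    have : ∫ σ in Ioc (0:ℝ) s, φ σ = ∫ σ in Ioc (0:ℝ) s, w σ * (s⁻¹ - t⁻¹) := by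
      refine setIntegral_congr_fun measurableSet_Ioc fun σ hσ => ?_
      show w σ * ((max s σ)⁻¹ - t⁻¹) = w σ * (s⁻¹ - t⁻¹)
      rw [max_eq_left hσ.2]
    rw [this, integral_mul_const, integral_Ioc_eq_integral_Ioo]
  have hwmul : IntegrableOn (fun σ => w σ * σ⁻¹) (Ioc s t) := by
    rw [IntegrableOn, ← Measure.restrict_congr_set Ioo_ae_eq_Ioc]
    simpa only [div_eq_mul_inv, IntegrableOn] using hwdiv
  have hwsst : IntegrableOn w (Ioc s t) :=
    hwIcc.mono_set fun x hx => ⟨le_trans (le_of_lt hs) (le_of_lt hx.1), hx.2⟩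
  have hIocIoo : ∫ σ in Ioc s t, w σ * σ⁻¹ = ∫ r in Ioo s t, w r / r := by
    rw [integral_Ioc_eq_integral_Ioo]
    simp only [div_eq_mul_inv]
  have hFtFs : ∫ σ in Ioc s t, w σ = F t - F s := by
    have h1 : ∫ σ in Ioc (0:ℝ) t, w σ = (∫ σ in Ioc (0:ℝ) s, w σ) + ∫ σ in Ioc s t, w σ := by
      rw [← setIntegral_union (Ioc_disjoint_Ioc_of_le le_rfl) measurableSet_Ioc
        (hwIoc.mono_set (Ioc_subset_Ioc le_rfl (le_of_lt hst))) hwsst,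
        Ioc_union_Ioc_eq_Ioc (le_of_lt hs) (le_of_lt hst)]
    have h2 : ∫ σ in Ioc (0:ℝ) t, w σ = F t := integral_Ioc_eq_integral_Ioo
    have h3 : ∫ σ in Ioc (0:ℝ) s, w σ = F s := integral_Ioc_eq_integral_Ioo
    rw [h2, h3] at h1
    linarith
  have hpiece2 : ∫ σ in Ioc s t, φ σ
      = (∫ r in Ioo s t, w r / r) - (F t - F s) * t⁻¹ := by
    have e1 : ∫ σ in Ioc s t, φ σ = ∫ σ in Ioc s t, (w σ * σ⁻¹ - w σ * t⁻¹) := by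
      refine setIntegral_congr_fun measurableSet_Ioc fun σ hσ => ?_
      show w σ * ((max s σ)⁻¹ - t⁻¹) = w σ * σ⁻¹ - w σ * t⁻¹
      rw [max_eq_right (le_of_lt hσ.1), mul_sub]
    rw [e1, integral_sub hwmul (hwsst.mul_const _), hIocIoo, integral_mul_const, hFtFs]
  -- chain of equalities for B := ∫ Pav w r / r
  have hB : ∫ r in Ioo s t, Pav w r / r = ∫ σ in Ioc (0:ℝ) t, φ σ := by
    have e1 : ∫ r in Ioo s t, Pav w r / r = ∫ r in Ioo s t, ∫ σ in Ioo (0:ℝ) t, f r σ := by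
      refine setIntegral_congr_fun measurableSet_Ioo fun r hr => ?_
      rw [hL r hr]
      have hr0 : (0:ℝ) < r := lt_trans hs hr.1
      have hrne : r ≠ 0 := ne_of_gt hr0
      show (1 / r * F r) / r = (r ^ 2)⁻¹ * F r
      ring
    have e2 : ∫ σ in Ioo (0:ℝ) t, ∫ r in Ioo s t, f r σ = ∫ σ in Ioo (0:ℝ) t, φ σ :=
      setIntegral_congr_fun measurableSet_Ioo fun σ hσ => hR σ hσ
    rw [e1, hswap, e2, ← integral_Ioc_eq_integral_Ioo]
  have hPts : Pav w t - Pav w s = F t * t⁻¹ - F s * s⁻¹ := by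
    rw [Pav, Pav]
    show (1/t) * F t - (1/s) * F s = _
    ring
  rw [hsplit, hB, hsplitφ, hpiece1, hpiece2, hPts]
  ring


lemma Pav_bound {C : ℝ} (hwInt : ∀ t > (0:ℝ), IntegrableOn w (Ioo 0 t))
    (hW : ∀ t > (0 : ℝ), |Pav w t - w t| ≤ C) {s t : ℝ} (hs : 0 < s) (hst : s ≤ t) :
    |Pav w s| ≤ |Pav w t| + C * (Real.log t - Real.log s) := by
  have hkey := keyA hwInt hW hs hst
  have hCr : IntegrableOn (fun r : ℝ => C * r⁻¹) (Ioo s t) := by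
    refine (ContinuousOn.integrableOn_Icc ?_).mono_set Ioo_subset_Icc_self
    exact continuousOn_const.mul
      (continuousOn_id.inv₀ fun x hx => ne_of_gt (lt_of_lt_of_le hs hx.1))
  have h2 : ‖∫ r in Ioo s t, (w r - Pav w r) / r‖ ≤ ∫ r in Ioo s t, C * r⁻¹ := by
    refine le_trans (norm_integral_le_integral_norm _) ?_
    refine setIntegral_mono_on (intOn_sub_div hwInt hW hs hst).norm hCr measurableSet_Ioo ?_
    intro r hr
    have hr0 : 0 < r := lt_trans hs hr.1
    rw [Real.norm_eq_abs, abs_div, abs_of_pos hr0, div_eq_mul_inv]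
    refine mul_le_mul_of_nonneg_right ?_ (inv_nonneg.mpr hr0.le)
    rw [abs_sub_comm]; exact hW r hr0
  rw [hkey, integral_const_mul, int_inv hs hst, Real.norm_eq_abs] at h2
  have h3 := abs_sub_abs_le_abs_sub (Pav w s) (Pav w t)
  rw [abs_sub_comm] at h3
  linarith

end FIIBPAux


open FIIBPAux in
/-- Finite-interval integration by parts: for every `t > 0`,
`∫₀ᵗ Pw(s) u(s) ds/s = Pw(t) ∫₀ᵗ u(s) ds/s − ∫₀ᵗ (w(r) − Pw(r)) (∫₀ʳ u(s) ds/s) dr/r`. -/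
theorem finite_interval_integration_by_parts {E : Type*} [NormedAddCommGroup E]
    [NormedSpace ℝ E] [CompleteSpace E] (u : ℝ → E) (w : ℝ → ℝ) (C : ℝ)
    (hwInt : ∀ t > (0 : ℝ), IntegrableOn w (Ioo 0 t))
    (hW : ∀ t > (0 : ℝ), |Pav w t - w t| ≤ C)
    (hu_meas : AEStronglyMeasurable u (volume.restrict (Ioi 0)))
    (hu_int : ∀ T > (0 : ℝ),
      IntegrableOn (fun s => (1 + |Real.log s|) * ‖u s‖ / s) (Ioo 0 T)) :
    ∀ t > (0 : ℝ),
      IntegrableOn (fun s => (Pav w s / s) • u s) (Ioo 0 t) ∧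
      IntegrableOn (fun s => s⁻¹ • u s) (Ioo 0 t) ∧
      IntegrableOn
        (fun r => ((w r - Pav w r) / r) • ∫ s in Ioo (0 : ℝ) r, s⁻¹ • u s) (Ioo 0 t) ∧
      ∫ s in Ioo (0 : ℝ) t, (Pav w s / s) • u s =
        Pav w t • (∫ s in Ioo (0 : ℝ) t, s⁻¹ • u s) -
          ∫ r in Ioo (0 : ℝ) t, ((w r - Pav w r) / r) • ∫ s in Ioo (0 : ℝ) r, s⁻¹ • u s := by
  intro t ht
  have hC0 : 0 ≤ C := le_trans (abs_nonneg _) (hW 1 one_pos)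
  set K : ℝ := 1 + max (Real.log t) 0 with hK
  have hK1 : 1 ≤ K := le_add_of_nonneg_right (le_max_right _ _)

  have hlogfact : ∀ σ : ℝ, 0 < σ → Real.log t - Real.log σ ≤ K * (1 + |Real.log σ|) := by
    intro σ hσ
    have h1 : Real.log t ≤ K := by
      have := le_max_left (Real.log t) 0; simp [hK]; linarith
    have h2 : -Real.log σ ≤ |Real.log σ| := neg_le_abs _
    have h3 : |Real.log σ| ≤ K * |Real.log σ| :=
      le_mul_of_one_le_left (abs_nonneg _) hK1
    nlinarith [abs_nonneg (Real.log σ)]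
  set K2 : ℝ := |Pav w t| + C * K with hK2
  have hu_restr : AEStronglyMeasurable u (volume.restrict (Ioo 0 t)) :=
    hu_meas.mono_measure (Measure.restrict_mono Ioo_subset_Ioi_self le_rfl)
  have huit := hu_int t ht
  -- bullet 2
  have hint2 : IntegrableOn (fun s => s⁻¹ • u s) (Ioo 0 t) := by
    refine Integrable.mono' huit
      ((measurable_inv.aestronglyMeasurable).smul hu_restr) ?_
    filter_upwards [ae_restrict_mem measurableSet_Ioo] with σ hσ
    rw [norm_smul, Real.norm_eq_abs, abs_inv, abs_of_pos hσ.1]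
    have h1 : σ⁻¹ * ‖u σ‖ = ‖u σ‖ / σ := by ring
    rw [h1]
    gcongr
    · exact hσ.1.le
    · nlinarith [abs_nonneg (Real.log σ), norm_nonneg (u σ)]
  -- bound for Pav
  have hPavb : ∀ σ : ℝ, σ ∈ Ioo (0:ℝ) t → |Pav w σ| ≤ K2 * (1 + |Real.log σ|) := by
    intro σ hσ
    have h1 := Pav_bound hwInt hW hσ.1 (le_of_lt hσ.2)
    have h2 := hlogfact σ hσ.1
    have h3 : |Pav w t| ≤ |Pav w t| * (1 + |Real.log σ|) :=
      le_mul_of_one_le_right (abs_nonneg _) (by nlinarith [abs_nonneg (Real.log σ)])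
    have h4 : C * (Real.log t - Real.log σ) ≤ C * (K * (1 + |Real.log σ|)) :=
      mul_le_mul_of_nonneg_left h2 hC0
    rw [hK2]
    nlinarith
  -- bullet 1
  have hint1 : IntegrableOn (fun s => (Pav w s / s) • u s) (Ioo 0 t) := by
    refine Integrable.mono' (huit.const_mul K2)
      ((aesm_div_id (aesm_Pav hwInt)).smul hu_restr) ?_
    filter_upwards [ae_restrict_mem measurableSet_Ioo] with σ hσ
    rw [norm_smul, Real.norm_eq_abs, abs_div, abs_of_pos hσ.1]
    calc |Pav w σ| / σ * ‖u σ‖ ≤ K2 * (1 + |Real.log σ|) / σ * ‖u σ‖ := by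
          gcongr
          · exact hσ.1.le
          · exact hPavb σ hσ
      _ = K2 * ((1 + |Real.log σ|) * ‖u σ‖ / σ) := by ring
  -- the Fubini setup
  set f : ℝ → ℝ → E := fun r σ => if σ < r then ((w r - Pav w r) / (r * σ)) • u σ else 0
    with hfdef
  have hS : MeasurableSet {p : ℝ × ℝ | p.2 < p.1} :=
    measurableSet_lt measurable_snd measurable_fst
  have hw_aesm : AEStronglyMeasurable w (volume.restrict (Ioo 0 t)) :=
    (hwInt t ht).aestronglyMeasurable
  have haesm : AEStronglyMeasurable (Function.uncurry f)
      ((volume.restrict (Ioo 0 t)).prod (volume.restrict (Ioo 0 t))) := by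
    have heq : Function.uncurry f = Set.indicator {p : ℝ × ℝ | p.2 < p.1}
        (fun p => ((w p.1 - Pav w p.1) * (p.1 * p.2)⁻¹) • u p.2) := by
      funext p
      by_cases h : p.2 < p.1 <;>
        simp [Function.uncurry, hfdef, h, Set.indicator, div_eq_mul_inv]
    rw [heq]
    refine AEStronglyMeasurable.indicator ?_ hS
    exact (((hw_aesm.sub (aesm_Pav hwInt)).comp_fst.mul
      ((measurable_fst.mul measurable_snd).inv.aestronglyMeasurable)).smul
      hu_restr.comp_snd)
  -- slice integrability and bounds
  have hslice : ∀ σ ∈ Ioo (0:ℝ) t,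
      Integrable (fun r => f r σ) (volume.restrict (Ioo 0 t)) ∧
      ∫ r in Ioo (0:ℝ) t, ‖f r σ‖ ≤ C * K * ((1 + |Real.log σ|) * ‖u σ‖ / σ) := by
    intro σ hσ
    have hfσ : (fun r => f r σ)
        = fun r => ((Ioi σ).indicator (fun r => (w r - Pav w r) / (r * σ)) r) • u σ := by
      funext r
      by_cases h : σ < r <;> simp [hfdef, h, Set.indicator, mem_Ioi]
    have hIsc : IntegrableOn (fun r => (w r - Pav w r) / (r * σ)) (Ioo σ t) := by
      refine (((intOn_sub_div hwInt hW hσ.1 (le_of_lt hσ.2)).const_mul (1/σ)).congr ?_)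
      refine ae_of_all _ fun r => ?_
      show 1 / σ * ((w r - Pav w r) / r) = (w r - Pav w r) / (r * σ)
      ring
    have hinter : Ioi σ ∩ Ioo (0:ℝ) t = Ioo σ t := by
      ext r
      simp only [mem_inter_iff, mem_Ioi, mem_Ioo]
      exact ⟨fun h => ⟨h.1, h.2.2⟩, fun h => ⟨h.1, lt_trans hσ.1 h.1, h.2⟩⟩
    have hindic : Integrable
        ((Ioi σ).indicator (fun r => (w r - Pav w r) / (r * σ)))
        (volume.restrict (Ioo 0 t)) := by
      rw [integrable_indicator_iff measurableSet_Ioi,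
        IntegrableOn, Measure.restrict_restrict measurableSet_Ioi, hinter]
      exact hIsc
    constructor
    · rw [hfσ]
      exact hindic.smul_const (u σ)
    · have hdom : IntegrableOn (fun r : ℝ => (C * r⁻¹) * (‖u σ‖ / σ)) (Ioo σ t) := by
        refine (ContinuousOn.integrableOn_Icc ?_).mono_set Ioo_subset_Icc_self
        exact (continuousOn_const.mul (continuousOn_id.inv₀
          fun x hx => ne_of_gt (lt_of_lt_of_le hσ.1 hx.1))).mul continuousOn_const
      have hdomi : Integrable
          ((Ioi σ).indicator (fun r : ℝ => (C * r⁻¹) * (‖u σ‖ / σ)))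
          (volume.restrict (Ioo 0 t)) := by
        rw [integrable_indicator_iff measurableSet_Ioi,
          IntegrableOn, Measure.restrict_restrict measurableSet_Ioi, hinter]
        exact hdom
      have hmono : ∫ r in Ioo (0:ℝ) t, ‖f r σ‖
          ≤ ∫ r in Ioo (0:ℝ) t, (Ioi σ).indicator (fun r => (C * r⁻¹) * (‖u σ‖ / σ)) r := by
        refine integral_mono_of_nonneg (ae_of_all _ fun r => norm_nonneg _) hdomi ?_
        filter_upwards [ae_restrict_mem measurableSet_Ioo] with r hr
        by_cases h : σ < r
        · simp only [hfdef, if_pos h, Set.indicator, mem_Ioi, h, if_true]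
          rw [norm_smul, Real.norm_eq_abs, abs_div, abs_of_pos (mul_pos hr.1 hσ.1)]
          have hb : |w r - Pav w r| ≤ C := by rw [abs_sub_comm]; exact hW r hr.1
          have e2 : C / (r * σ) * ‖u σ‖ = C * r⁻¹ * (‖u σ‖ / σ) := by
            field_simp
          calc |w r - Pav w r| / (r * σ) * ‖u σ‖ ≤ C / (r * σ) * ‖u σ‖ := by
                gcongr
                exact (mul_pos hr.1 hσ.1).le
            _ = C * r⁻¹ * (‖u σ‖ / σ) := e2
        · simp only [hfdef, if_neg h, Set.indicator, mem_Ioi, h, if_false, norm_zero]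
          positivity
      have hinter2 : Ioo (0:ℝ) t ∩ Ioi σ = Ioo σ t := by
        ext r
        simp only [mem_inter_iff, mem_Ioi, mem_Ioo]
        exact ⟨fun h => ⟨h.2, h.1.2⟩, fun h => ⟨⟨lt_trans hσ.1 h.1, h.2⟩, h.1⟩⟩
      have hcomp : ∫ r in Ioo (0:ℝ) t, (Ioi σ).indicator
            (fun r => (C * r⁻¹) * (‖u σ‖ / σ)) r
          = (C * (Real.log t - Real.log σ)) * (‖u σ‖ / σ) := by
        rw [setIntegral_indicator measurableSet_Ioi, hinter2, integral_mul_const,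
          integral_const_mul, int_inv hσ.1 (le_of_lt hσ.2)]
      refine le_trans hmono ?_
      rw [hcomp]
      calc (C * (Real.log t - Real.log σ)) * (‖u σ‖ / σ)
          ≤ (C * (K * (1 + |Real.log σ|))) * (‖u σ‖ / σ) := by
            refine mul_le_mul_of_nonneg_right ?_ (div_nonneg (norm_nonneg _) hσ.1.le)
            exact mul_le_mul_of_nonneg_left (hlogfact σ hσ.1) hC0
        _ = C * K * ((1 + |Real.log σ|) * ‖u σ‖ / σ) := by ring
  -- product integrability
  have hprod : Integrable (Function.uncurry f)
      ((volume.restrict (Ioo 0 t)).prod (volume.restrict (Ioo 0 t))) := by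
    refine (integrable_prod_iff' haesm).2 ⟨?_, ?_⟩
    · filter_upwards [ae_restrict_mem measurableSet_Ioo] with σ hσ
      exact (hslice σ hσ).1
    · refine Integrable.mono' (huit.const_mul (C * K))
        ((haesm.norm.prod_swap).integral_prod_right') ?_
      filter_upwards [ae_restrict_mem measurableSet_Ioo] with σ hσ
      rw [Real.norm_eq_abs, abs_of_nonneg (integral_nonneg fun r => norm_nonneg _)]
      exact (hslice σ hσ).2
  have hswap := integral_integral_swap hprod
  -- identify the two iterated integrals
  have hLmain : ∀ r ∈ Ioo (0:ℝ) t, ∫ σ in Ioo (0:ℝ) t, f r σ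
      = ((w r - Pav w r) / r) • ∫ σ in Ioo (0:ℝ) r, σ⁻¹ • u σ := by
    intro r hr
    have e1 : ∫ σ in Ioo (0:ℝ) t, f r σ = ∫ σ in Ioo (0:ℝ) t,
        ((w r - Pav w r) / r) • ((Ioo (0:ℝ) r).indicator (fun σ => σ⁻¹ • u σ) σ) := by
      refine setIntegral_congr_fun measurableSet_Ioo fun σ hσ => ?_
      by_cases h : σ < r
      · have hσr : σ ∈ Ioo (0:ℝ) r := ⟨hσ.1, h⟩
        simp only [hfdef, if_pos h, Set.indicator, hσr, if_true, smul_smul]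
        congr 1
        show (w r - Pav w r) / (r * σ) = (w r - Pav w r) / r * σ⁻¹
        ring
      · have hσr : σ ∉ Ioo (0:ℝ) r := fun hc => h hc.2
        simp [hfdef, h, Set.indicator, hσr]
    rw [e1, integral_smul, setIntegral_indicator measurableSet_Ioo,
      inter_eq_self_of_subset_right (Ioo_subset_Ioo le_rfl (le_of_lt hr.2))]
  have hRmain : ∀ σ ∈ Ioo (0:ℝ) t, ∫ r in Ioo (0:ℝ) t, f r σ
      = (Pav w t - Pav w σ) • (σ⁻¹ • u σ) := by
    intro σ hσ
    have e1 : ∫ r in Ioo (0:ℝ) t, f r σ = ∫ r in Ioo (0:ℝ) t,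
        ((Ioi σ).indicator (fun r => (w r - Pav w r) / r) r) • (σ⁻¹ • u σ) := by
      refine setIntegral_congr_fun measurableSet_Ioo fun r hr => ?_
      by_cases h : σ < r
      · simp only [hfdef, if_pos h, Set.indicator, mem_Ioi, h, if_true, smul_smul]
        congr 1
        show (w r - Pav w r) / (r * σ) = (w r - Pav w r) / r * σ⁻¹
        ring
      · simp [hfdef, h, Set.indicator, mem_Ioi]
    have hinter2 : Ioo (0:ℝ) t ∩ Ioi σ = Ioo σ t := by
      ext r
      simp only [mem_inter_iff, mem_Ioi, mem_Ioo]
      exact ⟨fun h => ⟨h.2, h.1.2⟩, fun h => ⟨⟨lt_trans hσ.1 h.1, h.2⟩, h.1⟩⟩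
    rw [e1, integral_smul_const, setIntegral_indicator measurableSet_Ioi, hinter2,
      keyA hwInt hW hσ.1 (le_of_lt hσ.2)]
  -- bullet 3
  have hint3 : IntegrableOn
      (fun r => ((w r - Pav w r) / r) • ∫ s in Ioo (0 : ℝ) r, s⁻¹ • u s) (Ioo 0 t) := by
    refine (hprod.integral_prod_left).congr ?_
    filter_upwards [ae_restrict_mem measurableSet_Ioo] with r hr
    exact hLmain r hr
  refine ⟨hint1, hint2, hint3, ?_⟩
  -- final computation
  have eL : ∫ r in Ioo (0:ℝ) t, ∫ σ in Ioo (0:ℝ) t, f r σ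
      = ∫ r in Ioo (0:ℝ) t, ((w r - Pav w r) / r) • ∫ σ in Ioo (0:ℝ) r, σ⁻¹ • u σ :=
    setIntegral_congr_fun measurableSet_Ioo fun r hr => hLmain r hr
  have eR : ∫ σ in Ioo (0:ℝ) t, ∫ r in Ioo (0:ℝ) t, f r σ
      = ∫ σ in Ioo (0:ℝ) t, (Pav w t - Pav w σ) • (σ⁻¹ • u σ) :=
    setIntegral_congr_fun measurableSet_Ioo fun σ hσ => hRmain σ hσ
  have eR2 : ∫ σ in Ioo (0:ℝ) t, (Pav w t - Pav w σ) • (σ⁻¹ • u σ)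
      = Pav w t • (∫ σ in Ioo (0:ℝ) t, σ⁻¹ • u σ)
        - ∫ σ in Ioo (0:ℝ) t, (Pav w σ / σ) • u σ := by
    have e1 : ∫ σ in Ioo (0:ℝ) t, (Pav w t - Pav w σ) • (σ⁻¹ • u σ)
        = ∫ σ in Ioo (0:ℝ) t,
            (Pav w t • (σ⁻¹ • u σ) - (Pav w σ / σ) • u σ) := by
      refine setIntegral_congr_fun measurableSet_Ioo fun σ hσ => ?_
      rw [sub_smul]
      congr 1
      rw [smul_smul, div_eq_mul_inv]
    have hintc : Integrable (fun σ => Pav w t • (σ⁻¹ • u σ)) (volume.restrict (Ioo 0 t)) :=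
      hint2.smul (Pav w t)
    rw [e1, integral_sub hintc hint1, integral_smul]
  have hmain : ∫ r in Ioo (0:ℝ) t, ((w r - Pav w r) / r) • ∫ σ in Ioo (0:ℝ) r, σ⁻¹ • u σ
      = Pav w t • (∫ σ in Ioo (0:ℝ) t, σ⁻¹ • u σ)
        - ∫ σ in Ioo (0:ℝ) t, (Pav w σ / σ) • u σ := by
    rw [← eL, hswap, eR, eR2]
  rw [hmain]
  abel
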